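/- Let m ≥ 2, B ∈ SL_2(Z/2^m Z), and n > 4. Define Δ_n^B(m) as the set of n-tuples (a_1,...,a_n) in (Z/2^m Z)^n with M_n(a_1,...,a_n) = B and a_2 invertible. Then |Δ_n^B(m)| = 2^{m-1}|Δ_{n-1}^B(m)| + 2^{2m-1}|Δ_{n-2}^B(m)|. -/

import Mathlib

open Matrix

def matM {A : Type*} [CommRing A] (x : A) : Matrix (Fin 2) (Fin 2) A := !![x, -1; 1, 0]

def Mn {A : Type*} [CommRing A] {n : ℕ} (a : Fin n → A) : Matrix (Fin 2) (Fin 2) A :=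
  ((List.ofFn fun i => matM (a i)).reverse).prod

def matMinv {A : Type*} [CommRing A] (x : A) : Matrix (Fin 2) (Fin 2) A := !![0, 1; -1, x]

lemma matMinv_mul {A : Type*} [CommRing A] (x : A) : matMinv x * matM x = 1 := by
  simp [matMinv, matM, Matrix.mul_fin_two]
  rw [← Matrix.one_fin_two]

lemma matM_mul_inv {A : Type*} [CommRing A] (x : A) : matM x * matMinv x = 1 := by
  simp [matMinv, matM, Matrix.mul_fin_two]
  rw [← Matrix.one_fin_two]

lemma Mn_snoc {A : Type*} [CommRing A] {n : ℕ} (b : Fin n → A) (x : A) :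
    Mn (Fin.snoc b x) = matM x * Mn b := by
  rw [Mn, List.ofFn_succ', List.concat_eq_append, List.reverse_append]
  simp [Mn, Fin.snoc_castSucc]

lemma Mn3 {A : Type*} [CommRing A] (a : Fin 3 → A) :
    Mn a = !![a 2 * (a 1 * a 0 - 1) - a 0, -(a 2 * a 1) + 1; a 1 * a 0 - 1, -(a 1)] := by
  simp [Mn, List.ofFn_succ, matM, Matrix.mul_fin_two]
  ring_nf
  all_goals trivial

section ZModFacts

variable {m : ℕ}

lemma isUnit_iff_phi (hm : 0 < m) (x : ZMod (2^m)) :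
    IsUnit x ↔ ZMod.castHom (dvd_pow_self 2 hm.ne') (ZMod 2) x = 1 := by
  haveI : NeZero (2^m) := ⟨pow_ne_zero _ two_ne_zero⟩
  have hx : (x.val : ZMod (2^m)) = x := ZMod.natCast_rightInverse x
  rw [← hx, ZMod.isUnit_iff_coprime, map_natCast]
  rw [Nat.coprime_pow_right_iff hm, Nat.coprime_two_right]
  constructor
  · rintro ⟨k, hk⟩; rw [hk]; push_cast; rw [show (2:ZMod 2) = 0 from rfl]; ring
  · intro h
    rcases Nat.even_or_odd x.val with he | ho
    · exfalso; rcases he with ⟨k, hk⟩; rw [hk] at h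
      rw [show k + k = 2 * k by ring] at h; push_cast at h
      rw [show (2:ZMod 2) = 0 from rfl] at h
      simp at h
    · exact ho

lemma not_isUnit_iff_phi (hm : 0 < m) (x : ZMod (2^m)) :
    ¬ IsUnit x ↔ ZMod.castHom (dvd_pow_self 2 hm.ne') (ZMod 2) x = 0 := by
  rw [isUnit_iff_phi hm]
  rcases (by decide : ∀ y : ZMod 2, y = 0 ∨ y = 1)
      (ZMod.castHom (dvd_pow_self 2 hm.ne') (ZMod 2) x) with h | h <;> simp [h]

/-- if the (1,1) entry of a det-1 matrix is not a unit, the (0,1) entry is. -/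
lemma det_fact (hm : 0 < m) (B : Matrix (Fin 2) (Fin 2) (ZMod (2^m))) (hB : B.det = 1)
    (h11 : ¬ IsUnit (B 1 1)) : IsUnit (B 0 1) := by
  set φ := ZMod.castHom (dvd_pow_self 2 hm.ne') (ZMod 2) with hφ
  rw [isUnit_iff_phi hm]
  rw [not_isUnit_iff_phi hm] at h11
  have hdet : B 0 0 * B 1 1 - B 0 1 * B 1 0 = 1 := by rw [← hB, Matrix.det_fin_two]
  have h2 : φ (B 0 0) * φ (B 1 1) - φ (B 0 1) * φ (B 1 0) = 1 := by
    rw [← _root_.map_mul, ← _root_.map_mul, ← map_sub, hdet, _root_.map_one]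
  rw [h11] at h2
  revert h2
  generalize φ (B 0 0) = p; generalize φ (B 0 1) = q; generalize φ (B 1 0) = r
  revert p q r; decide

/-- a nonunit plus a unit is a unit -/
lemma isUnit_add (hm : 0 < m) {x y : ZMod (2^m)} (hx : ¬ IsUnit x) (hy : IsUnit y) :
    IsUnit (x + y) := by
  rw [isUnit_iff_phi hm] at hy ⊢
  rw [not_isUnit_iff_phi hm] at hx
  rw [map_add, hx, hy, zero_add]

lemma not_isUnit_mul (hm : 0 < m) {x : ZMod (2^m)} (hx : ¬ IsUnit x) (z : ZMod (2^m)) :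
    ¬ IsUnit (z * x) := by
  rw [not_isUnit_iff_phi hm] at hx ⊢
  rw [_root_.map_mul, hx, mul_zero]

end ZModFacts

lemma nat_card_sigma {ι : Type*} [Fintype ι] (α : ι → Type*) [∀ i, Finite (α i)] :
    Nat.card (Σ i, α i) = ∑ i, Nat.card (α i) := by
  classical
  haveI := fun i => Fintype.ofFinite (α i)
  simp [Nat.card_eq_fintype_card, Fintype.card_sigma]

section Count

variable (m : ℕ)

/-- number of unit elements -/
lemma card_units_zmod (hm : 0 < m) :
    (Finset.univ.filter (fun x : ZMod (2^m) => IsUnit x)).card = 2^(m-1) := by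
  haveI : NeZero (2^m) := ⟨pow_ne_zero _ two_ne_zero⟩
  classical
  have e : {x : ZMod (2^m) // IsUnit x} ≃ (ZMod (2^m))ˣ :=
    { toFun := fun x => x.2.unit
      invFun := fun u => ⟨↑u, u.isUnit⟩
      left_inv := fun x => Subtype.ext x.2.unit_spec
      right_inv := fun u => Units.ext (IsUnit.unit_spec _) }
  have := Fintype.card_congr e
  rw [Fintype.card_subtype] at this
  rw [this, ZMod.card_units_eq_totient, Nat.totient_prime_pow Nat.prime_two hm]
  simp

lemma sum_ite_isUnit (hm : 0 < m) (t e : ℕ) :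
    ∑ x : ZMod (2^m), (if IsUnit x then t else e) = 2^(m-1) * t + 2^(m-1) * e := by
  haveI : NeZero (2^m) := ⟨pow_ne_zero _ two_ne_zero⟩
  classical
  rw [Finset.sum_ite]
  rw [Finset.sum_const, Finset.sum_const, smul_eq_mul, smul_eq_mul]
  rw [card_units_zmod m hm]
  have hfc := Finset.card_filter_add_card_filter_not
      (s := (Finset.univ : Finset (ZMod (2^m)))) (p := fun x => IsUnit x)
  rw [card_units_zmod m hm, Finset.card_univ, ZMod.card] at hfc
  have h3 : 2^m = 2^(m-1) * 2 := by rw [← pow_succ]; congr 1; omega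
  have h4 : (Finset.univ.filter (fun x : ZMod (2^m) => ¬ IsUnit x)).card = 2^(m-1) := by omega
  rw [h4]

lemma sum_ite_isUnit_affine (hm : 0 < m) (b c : ZMod (2^m)) (t e : ℕ) :
    ∑ x : ZMod (2^m), (if IsUnit (x * b + c) then t else e) =
      if IsUnit b then 2^(m-1) * t + 2^(m-1) * e
      else if IsUnit c then 2^m * t else 2^m * e := by
  haveI : NeZero (2^m) := ⟨pow_ne_zero _ two_ne_zero⟩
  classical
  split_ifs with hb hc
  · obtain ⟨u, hu⟩ := hb
    have heq : ∑ x : ZMod (2^m), (if IsUnit (x * b + c) then t else e)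
        = ∑ x : ZMod (2^m), (if IsUnit x then t else e) := by
      apply Fintype.sum_equiv ((Units.mulRight u).trans (Equiv.addRight c))
      intro x
      simp [Units.mulRight, Equiv.addRight, hu]
    rw [heq, sum_ite_isUnit m hm]
  · have : ∀ x : ZMod (2^m), IsUnit (x * b + c) := fun x =>
      isUnit_add hm (not_isUnit_mul hm hb x) hc
    simp only [this, if_true, Finset.sum_const, smul_eq_mul, Finset.card_univ, ZMod.card]
  · have : ∀ x : ZMod (2^m), ¬ IsUnit (x * b + c) := by
      intro x hx
      have h1 : ¬ IsUnit (x * b) := not_isUnit_mul hm hb x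
      rw [isUnit_iff_phi hm, map_add] at hx
      rw [not_isUnit_iff_phi hm] at h1
      rw [(not_isUnit_iff_phi hm c).1 hc, h1] at hx
      simp at hx
    simp only [this, if_false, Finset.sum_const, smul_eq_mul, Finset.card_univ, ZMod.card]

end Count
lemma card3 {m : ℕ} (B : Matrix (Fin 2) (Fin 2) (ZMod (2^m))) (hB : B.det = 1) :
    Nat.card {a : Fin 3 → ZMod (2^m) // Mn a = B ∧ IsUnit (a 1)} =
      if IsUnit (B 1 1) then 1 else 0 := by
  have hdet : B 0 0 * B 1 1 - B 0 1 * B 1 0 = 1 := by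
    rw [← hB, Matrix.det_fin_two]
  split_ifs with hu
  · obtain ⟨u, hu⟩ := hu
    set v : ZMod (2^m) := ↑u⁻¹ with hv
    have hv1 : v * B 1 1 = 1 := by rw [hv, ← hu]; exact u.inv_mul
    rw [Nat.card_eq_one_iff_unique]
    constructor
    · constructor
      rintro ⟨a, ha, hua⟩ ⟨b, hb, hub⟩
      rw [Mn3] at ha hb
      have ha11 := congrFun (congrFun ha 1) 1
      have hb11 := congrFun (congrFun hb 1) 1
      have ha10 := congrFun (congrFun ha 1) 0
      have hb10 := congrFun (congrFun hb 1) 0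
      have ha01 := congrFun (congrFun ha 0) 1
      have hb01 := congrFun (congrFun hb 0) 1
      simp only [Matrix.cons_val', Matrix.cons_val_zero, Matrix.cons_val_one, Matrix.head_cons,
        Matrix.empty_val', Matrix.cons_val_fin_one, Matrix.head_fin_const,
        Matrix.of_apply] at ha11 hb11 ha10 hb10 ha01 hb01
      have h1 : a 1 = b 1 := neg_injective (by rw [ha11, hb11])
      have h0 : a 0 = b 0 := hua.mul_left_cancel (by rw [← h1] at hb10; linear_combination ha10 - hb10)
      have h2 : a 2 = b 2 := hua.mul_right_cancel (by rw [← h1] at hb01; linear_combination hb01 - ha01)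
      apply Subtype.ext
      funext i
      fin_cases i
      · exact h0
      · exact h1
      · exact h2
    · refine ⟨![-(B 1 0 + 1) * v, -(B 1 1), (B 0 1 - 1) * v], ?_, ?_⟩
      · rw [Mn3, Matrix.eta_fin_two B]
        ext i j
        fin_cases i <;> fin_cases j <;>
          simp only [Matrix.cons_val', Matrix.cons_val_zero, Matrix.cons_val_one, Matrix.head_cons,
            Matrix.empty_val', Matrix.cons_val_fin_one, Matrix.head_fin_const, Matrix.of_apply,
            Matrix.cons_val_two, Matrix.tail_cons, Fin.isValue, Fin.mk_zero, Fin.mk_one]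
        · linear_combination (B 0 0 + (B 0 1 - 1) * (B 1 0 + 1) * v) * hv1 - v * hdet
        · linear_combination (B 0 1 - 1) * hv1
        · linear_combination (B 1 0 + 1) * hv1
        · ring
      · show IsUnit (-(B 1 1))
        rw [← hu]; exact u.isUnit.neg
  · haveI : IsEmpty {a : Fin 3 → ZMod (2^m) // Mn a = B ∧ IsUnit (a 1)} := by
      refine ⟨?_⟩
      rintro ⟨a, ha, hua⟩
      apply hu
      rw [Mn3] at ha
      have := congrFun (congrFun ha 1) 1
      simp only [Matrix.cons_val', Matrix.cons_val_zero, Matrix.cons_val_one, Matrix.head_cons,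
        Matrix.empty_val', Matrix.cons_val_fin_one, Matrix.head_fin_const, Matrix.of_apply] at this
      rw [← this]
      exact hua.neg
    exact Nat.card_of_isEmpty

noncomputable def cnt (m k : ℕ) (B : Matrix (Fin 2) (Fin 2) (ZMod (2^m))) : ℕ :=
  Nat.card {a : Fin (k+3) → ZMod (2^m) // Mn a = B ∧ IsUnit (a ⟨1, by omega⟩)}

lemma cnt_zero (m : ℕ) (B : Matrix (Fin 2) (Fin 2) (ZMod (2^m))) (hB : B.det = 1) :
    cnt m 0 B = if IsUnit (B 1 1) then 1 else 0 := by
  rw [← card3 B hB]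
  rfl

lemma matMinv_entry (m : ℕ) (x : ZMod (2^m)) (B : Matrix (Fin 2) (Fin 2) (ZMod (2^m))) :
    (matMinv x * B) 1 1 = x * B 1 1 + -(B 0 1) := by
  simp [matMinv, Matrix.mul_apply, Fin.sum_univ_two]
  ring

lemma matMinv_det (m : ℕ) (x : ZMod (2^m)) (B : Matrix (Fin 2) (Fin 2) (ZMod (2^m)))
    (hB : B.det = 1) : (matMinv x * B).det = 1 := by
  rw [Matrix.det_mul, hB, mul_one, matMinv, Matrix.det_fin_two_of]
  ring

lemma cnt_succ (m k : ℕ) (B : Matrix (Fin 2) (Fin 2) (ZMod (2^m))) :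
    cnt m (k+1) B = ∑ x : ZMod (2^m), cnt m k (matMinv x * B) := by
  haveI : NeZero (2^m) := ⟨pow_ne_zero _ two_ne_zero⟩
  set T := {a : Fin (k+1+3) → ZMod (2^m) // Mn a = B ∧ IsUnit (a ⟨1, by omega⟩)} with hT
  have E1 : (Σ x : ZMod (2^m), {a : T // a.1 (Fin.last (k+3)) = x}) ≃ T :=
    Equiv.sigmaFiberEquiv _
  have E2 : ∀ x : ZMod (2^m), {a : T // a.1 (Fin.last (k+3)) = x} ≃
      {b : Fin (k+3) → ZMod (2^m) // Mn b = matMinv x * B ∧ IsUnit (b ⟨1, by omega⟩)} := by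
    intro x
    refine
      { toFun := fun a => ⟨a.1.1 ∘ Fin.castSucc, ?_, ?_⟩
        invFun := fun b => ⟨⟨Fin.snoc b.1 x, ?_, ?_⟩, by simp⟩
        left_inv := ?_
        right_inv := ?_ }
    · obtain ⟨⟨f, hf1, hf2⟩, rfl⟩ := a
      have hsnoc : Fin.snoc (f ∘ Fin.castSucc) (f (Fin.last (k+3))) = f :=
        Fin.snoc_init_self f
      have h1 : matM (f (Fin.last (k+3))) * Mn (f ∘ Fin.castSucc) = B := by
        rw [← Mn_snoc, hsnoc]; exact hf1
      calc Mn (f ∘ Fin.castSucc)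
          = (matMinv (f (Fin.last (k+3))) * matM (f (Fin.last (k+3)))) *
              Mn (f ∘ Fin.castSucc) := by rw [matMinv_mul, one_mul]
        _ = matMinv (f (Fin.last (k+3))) * B := by rw [mul_assoc, h1]
    · exact a.1.2.2
    · rw [Mn_snoc, b.2.1, ← mul_assoc, matM_mul_inv, one_mul]
    · have hcast : (⟨1, by omega⟩ : Fin (k+1+3)) =
          Fin.castSucc (⟨1, by omega⟩ : Fin (k+3)) := rfl
      rw [hcast, Fin.snoc_castSucc]
      exact b.2.2
    · rintro ⟨⟨a, ha⟩, hx⟩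
      apply Subtype.ext
      apply Subtype.ext
      simp only at hx ⊢
      rw [← hx]
      exact Fin.snoc_init_self a
    · rintro ⟨b, hb⟩
      apply Subtype.ext
      funext i
      simp
  have E3 : T ≃ Σ x : ZMod (2^m),
      {b : Fin (k+3) → ZMod (2^m) // Mn b = matMinv x * B ∧ IsUnit (b ⟨1, by omega⟩)} :=
    E1.symm.trans (Equiv.sigmaCongrRight E2)
  rw [cnt, Nat.card_congr E3, nat_card_sigma]
  rfl

lemma cnt_one (m : ℕ) (hm : 0 < m) (B : Matrix (Fin 2) (Fin 2) (ZMod (2^m)))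
    (hB : B.det = 1) :
    cnt m 1 B = if IsUnit (B 1 1) then 2^(m-1) else 2^m := by
  haveI : NeZero (2^m) := ⟨pow_ne_zero _ two_ne_zero⟩
  rw [cnt_succ]
  have h1 : ∀ x : ZMod (2^m), cnt m 0 (matMinv x * B) =
      if IsUnit (x * B 1 1 + -(B 0 1)) then 1 else 0 := by
    intro x
    rw [cnt_zero m _ (matMinv_det m x B hB), matMinv_entry]
  simp only [h1]
  rw [sum_ite_isUnit_affine m hm]
  split_ifs with h2 h3
  · ring
  · ring
  · exact absurd ((det_fact hm B hB h2).neg) h3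

lemma cnt_two (m : ℕ) (hm : 0 < m) (B : Matrix (Fin 2) (Fin 2) (ZMod (2^m)))
    (hB : B.det = 1) :
    cnt m 2 B = if IsUnit (B 1 1) then 2^(m-1)*2^(m-1) + 2^(m-1)*2^m
      else 2^m * 2^(m-1) := by
  haveI : NeZero (2^m) := ⟨pow_ne_zero _ two_ne_zero⟩
  rw [cnt_succ]
  have h1 : ∀ x : ZMod (2^m), cnt m 1 (matMinv x * B) =
      if IsUnit (x * B 1 1 + -(B 0 1)) then 2^(m-1) else 2^m := by
    intro x
    rw [cnt_one m hm _ (matMinv_det m x B hB), matMinv_entry]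
  simp only [h1]
  rw [sum_ite_isUnit_affine m hm]
  split_ifs with h2 h3
  · rfl
  · rfl
  · exact absurd ((det_fact hm B hB h2).neg) h3

lemma key (m : ℕ) (hm : 0 < m) (k : ℕ) : ∀ B : Matrix (Fin 2) (Fin 2) (ZMod (2^m)),
    B.det = 1 →
    cnt m (k+2) B = 2^(m-1) * cnt m (k+1) B + 2^(2*m-1) * cnt m k B := by
  haveI : NeZero (2^m) := ⟨pow_ne_zero _ two_ne_zero⟩
  induction k with
  | zero =>
    intro B hB
    rw [cnt_two m hm B hB, cnt_one m hm B hB, cnt_zero m B hB]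
    have e1 : 2^(m-1) * 2^m = 2^(2*m-1) := by
      rw [← pow_add]; congr 1; omega
    have e2 : 2^m * 2^(m-1) = 2^(2*m-1) := by
      rw [← pow_add]; congr 1; omega
    split_ifs with h
    · rw [e1]; ring
    · rw [mul_zero, add_zero, mul_comm]
  | succ k ih =>
    intro B hB
    have hstep : cnt m (k+1+2) B = ∑ x : ZMod (2^m), cnt m (k+2) (matMinv x * B) :=
      cnt_succ m (k+2) B
    rw [hstep]
    have h2 : ∀ x : ZMod (2^m), cnt m (k+2) (matMinv x * B) =
        2^(m-1) * cnt m (k+1) (matMinv x * B) + 2^(2*m-1) * cnt m k (matMinv x * B) :=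
      fun x => ih (matMinv x * B) (matMinv_det m x B hB)
    simp only [h2]
    rw [Finset.sum_add_distrib, ← Finset.mul_sum, ← Finset.mul_sum,
      ← cnt_succ, ← cnt_succ]

lemma bridge (m : ℕ) (j : ℕ) {l : ℕ} (hl : l = j + 3) (h1 : 1 < l)
    (B : Matrix (Fin 2) (Fin 2) (ZMod (2^m))) :
    Nat.card {a : Fin l → ZMod (2^m) // Mn a = B ∧ IsUnit (a ⟨1, h1⟩)} = cnt m j B := by
  subst hl; rfl

theorem stmt10 (m : ℕ) (hm : 2 ≤ m) (B : Matrix (Fin 2) (Fin 2) (ZMod (2 ^ m)))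
    (hB : B.det = 1) (n : ℕ) (hn : 4 < n) :
    Nat.card {a : Fin n → ZMod (2 ^ m) // Mn a = B ∧ IsUnit (a ⟨1, by omega⟩)} =
      2 ^ (m - 1) * Nat.card {a : Fin (n - 1) → ZMod (2 ^ m) // Mn a = B ∧ IsUnit (a ⟨1, by omega⟩)} +
      2 ^ (2 * m - 1) *
        Nat.card {a : Fin (n - 2) → ZMod (2 ^ m) // Mn a = B ∧ IsUnit (a ⟨1, by omega⟩)} := by
  rw [bridge m (n-5+2) (by omega), bridge m (n-5+1) (by omega), bridge m (n-5) (by omega)]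
  exact key m (by omega) (n-5) B hB
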